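/- Let P' ⊆ P be S-subbimodules of a connected graded S-ring T with LH(P) ⊆ ⟨LH(P')⟩. If P is of PBW-type (i.e. LH(⟨P⟩) ⊆ ⟨LH(P)⟩), then P' is also of PBW-type, and moreover ⟨P⟩ = ⟨P'⟩. -/
import Mathlib


variable {T : Type*} [Ring T]

/-- Projection onto the degree `n` homogeneous component. -/
noncomputable def projFun (𝒜 : ℕ → AddSubgroup T) [GradedRing 𝒜] (n : ℕ) (x : T) : T :=
  (DirectSum.decompose 𝒜 x n : T)

lemma projFun_add (𝒜 : ℕ → AddSubgroup T) [GradedRing 𝒜] (n : ℕ) (x y : T) :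
    projFun 𝒜 n (x + y) = projFun 𝒜 n x + projFun 𝒜 n y := by
  unfold projFun
  rw [DirectSum.decompose_add, DirectSum.add_apply, AddSubgroup.coe_add]

lemma projFun_neg (𝒜 : ℕ → AddSubgroup T) [GradedRing 𝒜] (n : ℕ) (x : T) :
    projFun 𝒜 n (-x) = - projFun 𝒜 n x := by
  unfold projFun
  rw [DirectSum.decompose_neg, DFinsupp.neg_apply, AddSubgroup.coe_neg]

/-- The `S`-subbimodule `T^{≤ n}` of elements of degree at most `n`. -/
noncomputable def degLE (𝒜 : ℕ → AddSubgroup T) [GradedRing 𝒜] (n : ℕ) : AddSubgroup T where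
  carrier := {x | ∀ m, n < m → projFun 𝒜 m x = 0}
  zero_mem' := by
    intro m hm
    unfold projFun
    rw [DirectSum.decompose_zero, DirectSum.zero_apply, AddSubgroup.coe_zero]
  add_mem' := by
    intro a b ha hb m hm
    rw [projFun_add, ha m hm, hb m hm, add_zero]
  neg_mem' := by
    intro a ha m hm
    rw [projFun_neg, ha m hm, neg_zero]

/-- `y` is the leading homogeneous part of `x`. -/
def IsLH (𝒜 : ℕ → AddSubgroup T) [GradedRing 𝒜] (x y : T) : Prop :=
  (x = 0 ∧ y = 0) ∨
    ∃ m, y = projFun 𝒜 m x ∧ y ≠ 0 ∧ ∀ k, m < k → projFun 𝒜 k x = 0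

/-- `LH(X)`, the set of leading homogeneous parts of elements of `X`. -/
def leadSet (𝒜 : ℕ → AddSubgroup T) [GradedRing 𝒜] (X : Set T) : Set T :=
  {y | ∃ x ∈ X, IsLH 𝒜 x y}

/-- An additive subgroup of `T` which is an `S = T^0`-subbimodule. -/
def IsSubbimodule (𝒜 : ℕ → AddSubgroup T) (X : AddSubgroup T) : Prop :=
  ∀ s ∈ 𝒜 0, ∀ x ∈ X, s * x ∈ X ∧ x * s ∈ X

/-- `T` is strongly graded: `T^{n+1} = T^1 T^n`. -/
def StronglyGraded (𝒜 : ℕ → AddSubgroup T) : Prop :=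
  ∀ n, (𝒜 (n + 1) : Set T) ⊆
    ↑(AddSubgroup.closure {y : T | ∃ a ∈ 𝒜 1, ∃ b ∈ 𝒜 n, y = a * b})


section Aux
variable (𝒜 : ℕ → AddSubgroup T) [GradedRing 𝒜]

lemma projFun_zero (n : ℕ) : projFun 𝒜 n (0 : T) = 0 := by
  unfold projFun
  rw [DirectSum.decompose_zero, DirectSum.zero_apply, AddSubgroup.coe_zero]

lemma projFun_sub (n : ℕ) (x y : T) :
    projFun 𝒜 n (x - y) = projFun 𝒜 n x - projFun 𝒜 n y := by
  rw [sub_eq_add_neg, projFun_add, projFun_neg, sub_eq_add_neg]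

/-- `projFun` as an additive group hom. -/
noncomputable def projHom (n : ℕ) : T →+ T where
  toFun := projFun 𝒜 n
  map_zero' := projFun_zero 𝒜 n
  map_add' := projFun_add 𝒜 n

lemma projFun_sum (n : ℕ) {ι : Type*} (s : Finset ι) (f : ι → T) :
    projFun 𝒜 n (∑ i ∈ s, f i) = ∑ i ∈ s, projFun 𝒜 n (f i) :=
  map_sum (projHom 𝒜 n) f s

lemma projFun_mem (n : ℕ) (x : T) : projFun 𝒜 n x ∈ 𝒜 n := (DirectSum.decompose 𝒜 x n).2

lemma projFun_of_mem_same {n : ℕ} {x : T} (hx : x ∈ 𝒜 n) : projFun 𝒜 n x = x :=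
  DirectSum.decompose_of_mem_same 𝒜 hx

lemma projFun_of_mem_ne {n m : ℕ} {x : T} (hx : x ∈ 𝒜 m) (h : m ≠ n) : projFun 𝒜 n x = 0 := by
  unfold projFun
  rw [DirectSum.decompose_of_mem_ne 𝒜 hx h]

lemma eq_zero_of_projFun {x : T} (h : ∀ m, projFun 𝒜 m x = 0) : x = 0 := by
  classical
  have := DirectSum.sum_support_decompose 𝒜 x
  rw [← this]
  exact Finset.sum_eq_zero fun i _ => h i

lemma exists_lead {x : T} (hx : x ≠ 0) :
    ∃ m, projFun 𝒜 m x ≠ 0 ∧ ∀ k, m < k → projFun 𝒜 k x = 0 := by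
  classical
  have hsupp : ((DirectSum.decompose 𝒜 x).support : Finset ℕ).Nonempty := by
    by_contra h
    rw [Finset.not_nonempty_iff_eq_empty] at h
    refine hx (eq_zero_of_projFun 𝒜 fun m => ?_)
    have : DirectSum.decompose 𝒜 x m = 0 := by
      by_contra hm
      exact (Finset.eq_empty_iff_forall_notMem.mp h m) (DFinsupp.mem_support_iff.mpr hm)
    unfold projFun
    rw [this]; rfl
  refine ⟨(DirectSum.decompose 𝒜 x).support.max' hsupp, ?_, ?_⟩
  · have := (DirectSum.decompose 𝒜 x).support.max'_mem hsupp
    rw [DFinsupp.mem_support_iff] at this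
    unfold projFun
    exact fun h => this (Subtype.ext h)
  · intro k hk
    have : k ∉ (DirectSum.decompose 𝒜 x).support := fun hmem =>
      absurd ((DirectSum.decompose 𝒜 x).support.le_max' k hmem) (not_le.mpr hk)
    rw [DFinsupp.notMem_support_iff] at this
    unfold projFun
    rw [this]; rfl

end Aux

section Key
variable (𝒜 : ℕ → AddSubgroup T) [GradedRing 𝒜]

lemma key_mul {a b q : T} {i j m n : ℕ} (ha : a ∈ 𝒜 i) (hb : b ∈ 𝒜 j)
    (hq : ∀ k, m < k → projFun 𝒜 k q = 0) (hn : i + m + j = n) :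
    projFun 𝒜 n (a * q * b) = a * projFun 𝒜 m q * b ∧
      ∀ k, n < k → projFun 𝒜 k (a * q * b) = 0 := by
  classical
  -- write q as a sum of homogeneous components of degree ≤ m
  have hqsum : q = ∑ t ∈ Finset.range (m + 1), projFun 𝒜 t q := by
    have h1 := DirectSum.sum_support_decompose 𝒜 q
    unfold projFun
    conv_lhs => rw [← h1]
    have hsub : (DirectSum.decompose 𝒜 q).support ⊆ Finset.range (m + 1) := by
      intro t ht
      rw [Finset.mem_range, Nat.lt_succ_iff]
      by_contra h
      push_neg at h
      exact DFinsupp.mem_support_iff.mp ht (Subtype.ext (hq t h))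
    have hz : ∀ t ∈ Finset.range (m + 1), t ∉ (DirectSum.decompose 𝒜 q).support →
        (DirectSum.decompose 𝒜 q t : T) = 0 := by
      intro t _ ht
      rw [DFinsupp.notMem_support_iff] at ht
      rw [ht]; rfl
    exact Finset.sum_subset hsub hz
  have hterm : ∀ t, a * projFun 𝒜 t q * b ∈ 𝒜 (i + t + j) := fun t =>
    SetLike.mul_mem_graded (SetLike.mul_mem_graded ha (projFun_mem 𝒜 t q)) hb
  have hexp : ∀ k, projFun 𝒜 k (a * q * b) =
      ∑ t ∈ Finset.range (m + 1), projFun 𝒜 k (a * projFun 𝒜 t q * b) := by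
    intro k
    conv_lhs => rw [hqsum]
    rw [Finset.mul_sum, Finset.sum_mul]
    exact map_sum (projHom 𝒜 k) _ _
  constructor
  · rw [hexp n]
    rw [Finset.sum_eq_single m]
    · exact projFun_of_mem_same 𝒜 (hn ▸ hterm m)
    · intro t _ htm
      exact projFun_of_mem_ne 𝒜 (hterm t) (by omega)
    · intro h
      exact absurd (Finset.self_mem_range_succ m) h
  · intro k hk
    rw [hexp k]
    refine Finset.sum_eq_zero fun t ht => ?_
    rw [Finset.mem_range, Nat.lt_succ_iff] at ht
    exact projFun_of_mem_ne 𝒜 (hterm t) (by omega)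

end Key

section Rep
variable (𝒜 : ℕ → AddSubgroup T) [GradedRing 𝒜]

lemma exists_rep (P' : AddSubgroup T) {u : T}
    (hu : u ∈ TwoSidedIdeal.span (leadSet 𝒜 (P' : Set T))) (n : ℕ) :
    ∃ v ∈ TwoSidedIdeal.span (P' : Set T),
      projFun 𝒜 n v = projFun 𝒜 n u ∧ ∀ k, n < k → projFun 𝒜 k v = 0 := by
  classical
  rw [TwoSidedIdeal.mem_span_iff_mem_addSubgroup_closure] at hu
  refine AddSubgroup.closure_induction
    (p := fun z _ => ∃ v ∈ TwoSidedIdeal.span (P' : Set T),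
      projFun 𝒜 n v = projFun 𝒜 n z ∧ ∀ k, n < k → projFun 𝒜 k v = 0)
    ?_ ?_ ?_ ?_ hu
  · -- generators
    intro z hz
    obtain ⟨w, hw, b, -, rfl⟩ := hz
    obtain ⟨a, -, y, hy, rfl⟩ := hw
    beta_reduce
    obtain ⟨q, hqP, hLH⟩ := hy
    rcases hLH with ⟨rfl, rfl⟩ | ⟨m, hym, hyne, hqtop⟩
    · exact ⟨0, TwoSidedIdeal.zero_mem _, by rw [mul_zero, zero_mul],
        fun k _ => projFun_zero 𝒜 k⟩
    · set sa := (DirectSum.decompose 𝒜 a).support with hsa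
      set sb := (DirectSum.decompose 𝒜 b).support with hsb
      set A : ℕ → T := fun i => projFun 𝒜 i a with hA
      set B : ℕ → T := fun j => projFun 𝒜 j b with hB
      have hasum : a = ∑ i ∈ sa, A i := (DirectSum.sum_support_decompose 𝒜 a).symm
      have hbsum : b = ∑ j ∈ sb, B j := (DirectSum.sum_support_decompose 𝒜 b).symm
      have hymem : y ∈ 𝒜 m := hym ▸ projFun_mem 𝒜 m q
      have hterm : ∀ i j, A i * y * B j ∈ 𝒜 (i + m + j) := fun i j =>
        SetLike.mul_mem_graded (SetLike.mul_mem_graded (projFun_mem 𝒜 i a) hymem)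
          (projFun_mem 𝒜 j b)
      have hzsum : a * y * b = ∑ i ∈ sa, ∑ j ∈ sb, A i * y * B j := by
        conv_lhs => rw [hasum, hbsum]
        rw [Finset.sum_mul, Finset.sum_mul]
        exact Finset.sum_congr rfl fun i _ => by rw [Finset.mul_sum]
      refine ⟨∑ i ∈ sa, ∑ j ∈ sb, if i + m + j = n then A i * q * B j else 0,
        ?_, ?_, ?_⟩
      · refine sum_mem fun i _ => sum_mem fun j _ => ?_
        split_ifs
        · exact TwoSidedIdeal.mul_mem_right _ _ _
            (TwoSidedIdeal.mul_mem_left _ _ _ (TwoSidedIdeal.subset_span hqP))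
        · exact TwoSidedIdeal.zero_mem _
      · rw [hzsum]
        rw [projFun_sum, projFun_sum]
        refine Finset.sum_congr rfl fun i _ => ?_
        rw [projFun_sum, projFun_sum]
        refine Finset.sum_congr rfl fun j _ => ?_
        show projFun 𝒜 n (if i + m + j = n then A i * q * B j else 0) =
          projFun 𝒜 n (A i * y * B j)
        by_cases hc : i + m + j = n
        · have hn' : A i * y * B j ∈ 𝒜 n := by rw [← hc]; exact hterm i j
          rw [if_pos hc,
            (key_mul 𝒜 (projFun_mem 𝒜 i a) (projFun_mem 𝒜 j b) hqtop hc).1,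
            projFun_of_mem_same 𝒜 hn', ← hym]
        · rw [if_neg hc, projFun_zero, projFun_of_mem_ne 𝒜 (hterm i j) hc]
      · intro k hk
        rw [projFun_sum]
        refine Finset.sum_eq_zero fun i _ => ?_
        rw [projFun_sum]
        refine Finset.sum_eq_zero fun j _ => ?_
        show projFun 𝒜 k (if i + m + j = n then A i * q * B j else 0) = 0
        by_cases hc : i + m + j = n
        · rw [if_pos hc]
          exact (key_mul 𝒜 (projFun_mem 𝒜 i a) (projFun_mem 𝒜 j b) hqtop hc).2 k hk
        · rw [if_neg hc, projFun_zero]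
  · exact ⟨0, TwoSidedIdeal.zero_mem _, rfl, fun k _ => projFun_zero 𝒜 k⟩
  · rintro x y - - ⟨v₁, hv₁, hp₁, hk₁⟩ ⟨v₂, hv₂, hp₂, hk₂⟩
    exact ⟨v₁ + v₂, TwoSidedIdeal.add_mem _ hv₁ hv₂,
      by rw [projFun_add, projFun_add, hp₁, hp₂],
      fun k hk => by rw [projFun_add, hk₁ k hk, hk₂ k hk, add_zero]⟩
  · rintro x - ⟨v, hv, hp, hk⟩
    exact ⟨-v, TwoSidedIdeal.neg_mem _ hv,
      by rw [projFun_neg, projFun_neg, hp],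
      fun k hkk => by rw [projFun_neg, hk k hkk, neg_zero]⟩

end Rep

section Main
variable (𝒜 : ℕ → AddSubgroup T) [GradedRing 𝒜]

lemma span_subset_span (P P' : AddSubgroup T) (hle : P' ≤ P)
    (hgen : leadSet 𝒜 (P : Set T) ⊆ (TwoSidedIdeal.span (leadSet 𝒜 (P' : Set T)) : Set T))
    (hPBW : leadSet 𝒜 (TwoSidedIdeal.span (P : Set T) : Set T)
      ⊆ (TwoSidedIdeal.span (leadSet 𝒜 (P : Set T)) : Set T)) :
    ∀ n, ∀ u ∈ TwoSidedIdeal.span (P : Set T), (∀ k, n < k → projFun 𝒜 k u = 0) →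
      u ∈ TwoSidedIdeal.span (P' : Set T) := by
  intro n
  induction n using Nat.strong_induction_on with
  | _ n ih =>
    intro u hu hun
    by_cases hu0 : u = 0
    · rw [hu0]; exact TwoSidedIdeal.zero_mem _
    obtain ⟨m, hm, hk⟩ := exists_lead 𝒜 hu0
    have hmn : m ≤ n := by
      by_contra h
      exact hm (hun m (by omega))
    have hLH : projFun 𝒜 m u ∈ leadSet 𝒜 (TwoSidedIdeal.span (P : Set T) : Set T) :=
      ⟨u, hu, Or.inr ⟨m, rfl, hm, hk⟩⟩
    have h1 : projFun 𝒜 m u ∈ TwoSidedIdeal.span (leadSet 𝒜 (P' : Set T)) := by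
      have h2 := hPBW hLH
      rw [SetLike.mem_coe] at h2
      exact TwoSidedIdeal.mem_span_iff.mp h2 _ (fun x hx => hgen hx)
    obtain ⟨v, hv, hpv, hkv⟩ := exists_rep 𝒜 P' h1 m
    have hpvm : projFun 𝒜 m v = projFun 𝒜 m u := by
      rw [hpv, projFun_of_mem_same 𝒜 (projFun_mem 𝒜 m u)]
    have hvP : v ∈ TwoSidedIdeal.span (P : Set T) :=
      TwoSidedIdeal.span_mono (fun x hx => hle hx) hv
    have huv : u - v ∈ TwoSidedIdeal.span (P : Set T) := by
      rw [sub_eq_add_neg]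
      exact TwoSidedIdeal.add_mem _ hu (TwoSidedIdeal.neg_mem _ hvP)
    have hall : ∀ k, m ≤ k → projFun 𝒜 k (u - v) = 0 := by
      intro k hk'
      rw [projFun_sub]
      rcases eq_or_lt_of_le hk' with rfl | h
      · rw [hpvm, sub_self]
      · rw [hk k h, hkv k h, sub_self]
    rcases Nat.eq_zero_or_pos m with rfl | hm0
    · have h0 : u - v = 0 := eq_zero_of_projFun 𝒜 fun k => hall k (Nat.zero_le k)
      have h0' : u = v := by rwa [sub_eq_zero] at h0
      rw [h0']; exact hv
    · have h3 : u - v ∈ TwoSidedIdeal.span (P' : Set T) :=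
        ih (m - 1) (by omega) (u - v) huv (fun k hk' => hall k (by omega))
      have h4 := TwoSidedIdeal.add_mem _ h3 hv
      rwa [sub_add_cancel] at h4

end Main

/-- Proposition 2.1 (2). -/
theorem stmt_5 (𝒜 : ℕ → AddSubgroup T) [GradedRing 𝒜]
    (P P' : AddSubgroup T) (hP : IsSubbimodule 𝒜 P) (hP' : IsSubbimodule 𝒜 P')
    (hle : P' ≤ P)
    (hgen : leadSet 𝒜 (P : Set T) ⊆ (TwoSidedIdeal.span (leadSet 𝒜 (P' : Set T)) : Set T))
    (hPBW : leadSet 𝒜 (TwoSidedIdeal.span (P : Set T) : Set T)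
      ⊆ (TwoSidedIdeal.span (leadSet 𝒜 (P : Set T)) : Set T)) :
    leadSet 𝒜 (TwoSidedIdeal.span (P' : Set T) : Set T)
        ⊆ (TwoSidedIdeal.span (leadSet 𝒜 (P' : Set T)) : Set T) ∧
      TwoSidedIdeal.span (P : Set T) = TwoSidedIdeal.span (P' : Set T) := by
  have hspan_le : TwoSidedIdeal.span (P : Set T) ≤ TwoSidedIdeal.span (P' : Set T) := by
    intro u hu
    by_cases hu0 : u = 0
    · rw [hu0]; exact TwoSidedIdeal.zero_mem _
    obtain ⟨m, _, hk⟩ := exists_lead 𝒜 hu0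
    exact span_subset_span 𝒜 P P' hle hgen hPBW m u hu hk
  have heq : TwoSidedIdeal.span (P : Set T) = TwoSidedIdeal.span (P' : Set T) :=
    le_antisymm hspan_le (TwoSidedIdeal.span_mono (fun x hx => hle hx))
  refine ⟨?_, heq⟩
  rw [← heq]
  intro x hx
  have h2 := hPBW hx
  rw [SetLike.mem_coe] at h2 ⊢
  exact TwoSidedIdeal.mem_span_iff.mp h2 _ (fun y hy => hgen hy)
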